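/- Let w > 0, A₀ > 0, σ > 0, and let d ∈ ℝ² have the centered bivariate Gaussian density g(d) = (1/(2πσ²))·exp(−‖d‖²/(2σ²)). Then for the zero-boresight pointing loss Z = A₀·exp(−2‖d‖²/w²) and every z₀ with 0 < z₀ ≤ A₀, ∫_{{d ∈ ℝ² : A₀ exp(−2‖d‖²/w²) ≤ z₀}} g(d) dd = (z₀/A₀)^{w²/(4σ²)}. -/

import Mathlib

open Real MeasureTheory Set

lemma radial_gaussian_tail (σ : ℝ) (hσ : 0 < σ) (a : ℝ) (ha : 0 ≤ a) :
    ∫ x in Ioi a, x * Real.exp (-x ^ 2 / (2 * σ ^ 2)) =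
      σ ^ 2 * Real.exp (-a ^ 2 / (2 * σ ^ 2)) := by
  have hσ2 : (0:ℝ) < σ ^ 2 := by positivity
  have hderiv : ∀ x ∈ Ici a, HasDerivAt (fun r => -σ ^ 2 * Real.exp (-r ^ 2 / (2 * σ ^ 2)))
      (x * Real.exp (-x ^ 2 / (2 * σ ^ 2))) x := by
    intro x _
    have h1 : HasDerivAt (fun r : ℝ => -r ^ 2 / (2 * σ ^ 2)) (-(2 * x) / (2 * σ ^ 2)) x := by
      simpa using ((hasDerivAt_pow 2 x).neg.div_const (2 * σ ^ 2))
    have h2 := (h1.exp).const_mul (-σ ^ 2)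
    refine h2.congr_deriv ?_
    field_simp
  have hpos : ∀ x ∈ Ioi a, 0 ≤ x * Real.exp (-x ^ 2 / (2 * σ ^ 2)) := by
    intro x hx
    exact mul_nonneg (le_trans ha (le_of_lt hx)) (Real.exp_pos _).le
  have htend : Filter.Tendsto (fun r => -σ ^ 2 * Real.exp (-r ^ 2 / (2 * σ ^ 2)))
      Filter.atTop (nhds 0) := by
    have h1 : Filter.Tendsto (fun r : ℝ => r ^ 2 / (2 * σ ^ 2)) Filter.atTop Filter.atTop :=
      (Filter.tendsto_pow_atTop two_ne_zero).atTop_div_const (by positivity)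
    have h2 : Filter.Tendsto (fun r : ℝ => -r ^ 2 / (2 * σ ^ 2)) Filter.atTop Filter.atBot := by
      have := Filter.tendsto_neg_atTop_atBot.comp h1
      simpa [Function.comp_def, neg_div] using this
    have h3 := (Real.tendsto_exp_atBot.comp h2).const_mul (-σ ^ 2)
    simpa using h3
  have h := integral_Ioi_of_hasDerivAt_of_nonneg' hderiv hpos htend
  rw [h]
  ring

/-- The zero-boresight pointing loss `Z = A₀ exp(-2‖d‖²/w²)` under a centered
Gaussian beam displacement `d` has CDF `(z₀/A₀)^{w²/(4σ²)}`. -/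
theorem zero_boresight_pointing_loss_cdf
    (w A₀ σ : ℝ) (hw : 0 < w) (hA : 0 < A₀) (hσ : 0 < σ)
    (z₀ : ℝ) (hz₀ : 0 < z₀) (hz₀A : z₀ ≤ A₀) :
    (∫ d in {d : ℝ × ℝ | A₀ * Real.exp (-(2 * (d.1 ^ 2 + d.2 ^ 2)) / w ^ 2) ≤ z₀},
        (1 / (2 * π * σ ^ 2)) * Real.exp (-(d.1 ^ 2 + d.2 ^ 2) / (2 * σ ^ 2))) =
      (z₀ / A₀) ^ (w ^ 2 / (4 * σ ^ 2)) := by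
  have hσ2 : (0:ℝ) < σ ^ 2 := by positivity
  have hw2 : (0:ℝ) < w ^ 2 := by positivity
  set c : ℝ := w ^ 2 / 2 * Real.log (A₀ / z₀) with hc_def
  have hlog : 0 ≤ Real.log (A₀ / z₀) :=
    Real.log_nonneg (by rw [le_div_iff₀ hz₀]; linarith)
  have hc : 0 ≤ c := mul_nonneg (by positivity) hlog
  set a : ℝ := Real.sqrt c with ha_def
  have ha : 0 ≤ a := Real.sqrt_nonneg _
  have ha2 : a ^ 2 = c := Real.sq_sqrt hc
  -- the sub-level set is the exterior of the disk of radius `a`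
  have hset : {d : ℝ × ℝ | A₀ * Real.exp (-(2 * (d.1 ^ 2 + d.2 ^ 2)) / w ^ 2) ≤ z₀}
      = {d : ℝ × ℝ | c ≤ d.1 ^ 2 + d.2 ^ 2} := by
    ext d
    simp only [mem_setOf_eq]
    rw [mul_comm, ← le_div_iff₀ hA, ← Real.le_log_iff_exp_le (by positivity),
      Real.log_div (ne_of_gt hz₀) (ne_of_gt hA)]
    have hlAz : Real.log (A₀ / z₀) = Real.log A₀ - Real.log z₀ :=
      Real.log_div (ne_of_gt hA) (ne_of_gt hz₀)
    constructor
    · intro h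
      have := (div_le_iff₀ hw2).mp h
      rw [hc_def, hlAz]
      nlinarith
    · intro h
      rw [div_le_iff₀ hw2]
      rw [hc_def, hlAz] at h
      nlinarith
  set g : ℝ × ℝ → ℝ := fun d => (1 / (2 * π * σ ^ 2)) * Real.exp (-(d.1 ^ 2 + d.2 ^ 2) / (2 * σ ^ 2)) with hg_def
  have hmeas : MeasurableSet {d : ℝ × ℝ | c ≤ d.1 ^ 2 + d.2 ^ 2} := by
    apply measurableSet_le measurable_const
    exact ((measurable_fst.pow_const 2).add (measurable_snd.pow_const 2))
  rw [hset, ← integral_indicator hmeas, ← integral_comp_polarCoord_symm]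
  have htarget : polarCoord.target = Ioi (0:ℝ) ×ˢ Ioo (-π) π := rfl
  set F : ℝ → ℝ := fun x =>
    Set.indicator (Ici a) (fun r => r * ((1 / (2 * π * σ ^ 2)) * Real.exp (-r ^ 2 / (2 * σ ^ 2)))) x
    with hF_def
  have hcongr : ∀ p ∈ polarCoord.target,
      p.1 • Set.indicator {d : ℝ × ℝ | c ≤ d.1 ^ 2 + d.2 ^ 2} g (polarCoord.symm p)
        = F p.1 * (fun _ : ℝ => (1:ℝ)) p.2 := by
    rintro ⟨r, θ⟩ hp
    rw [htarget] at hp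
    have hr : 0 < r := hp.1
    have hsymm : polarCoord.symm (r, θ) = (r * Real.cos θ, r * Real.sin θ) := rfl
    have hnorm : (r * Real.cos θ) ^ 2 + (r * Real.sin θ) ^ 2 = r ^ 2 := by
      nlinarith [Real.sin_sq_add_cos_sq θ]
    have hiff : c ≤ r ^ 2 ↔ a ≤ r := by
      constructor
      · intro h
        have := Real.sqrt_le_sqrt h
        rwa [Real.sqrt_sq hr.le] at this
      · intro h
        rw [← ha2]
        nlinarith
    simp only [hsymm, hF_def, hg_def, Set.indicator_apply, mem_setOf_eq, mem_Ici, hnorm, hiff]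
    split_ifs with h
    · simp only [smul_eq_mul]; ring
    · simp
  rw [setIntegral_congr_fun (htarget ▸ (measurableSet_Ioi.prod measurableSet_Ioo)) hcongr,
    htarget, Measure.volume_eq_prod]
  rw [setIntegral_prod_mul F (fun _ : ℝ => (1:ℝ)) (Ioi 0) (Ioo (-π) π)]
  have hθ : (∫ _ in Ioo (-π) π, (1:ℝ)) = 2 * π := by
    rw [setIntegral_const, smul_eq_mul, mul_one, Real.volume_real_Ioo,
      max_eq_left (by linarith [Real.pi_pos] : (0:ℝ) ≤ π - -π)]
    ring
  have hr : (∫ x in Ioi (0:ℝ), F x) = (1 / (2 * π * σ ^ 2)) * (σ ^ 2 * Real.exp (-c / (2 * σ ^ 2))) := by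
    rw [hF_def, setIntegral_indicator measurableSet_Ici]
    have hae : (Ioi (0:ℝ) ∩ Ici a : Set ℝ) =ᵐ[volume] (Ioi a : Set ℝ) := by
      have h1 : (Ioi (0:ℝ) ∩ Ici a : Set ℝ) =ᵐ[volume] (Ioi (0:ℝ) ∩ Ioi a : Set ℝ) :=
        ae_eq_set_inter (ae_eq_refl _) Ioi_ae_eq_Ici.symm
      have h2 : Ioi (0:ℝ) ∩ Ioi a = Ioi a := by
        rw [Set.Ioi_inter_Ioi, max_eq_right ha]
      rw [h2] at h1
      exact h1
    rw [setIntegral_congr_set hae]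
    have : ∀ x : ℝ, x * ((1 / (2 * π * σ ^ 2)) * Real.exp (-x ^ 2 / (2 * σ ^ 2)))
        = (1 / (2 * π * σ ^ 2)) * (x * Real.exp (-x ^ 2 / (2 * σ ^ 2))) := fun x => by ring
    simp_rw [this]
    rw [integral_const_mul, radial_gaussian_tail σ hσ a ha, ha2]
  rw [hθ, hr]
  have hπ : (0:ℝ) < π := Real.pi_pos
  rw [Real.rpow_def_of_pos (by positivity : (0:ℝ) < z₀ / A₀)]
  have hlog_inv : Real.log (z₀ / A₀) = -Real.log (A₀ / z₀) := by
    rw [← Real.log_inv]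
    congr 1
    field_simp
  rw [hlog_inv]
  have harg : -c / (2 * σ ^ 2) = -Real.log (A₀ / z₀) * (w ^ 2 / (4 * σ ^ 2)) := by
    rw [hc_def]; field_simp; ring
  rw [← harg]
  field_simp
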